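/- arXiv:2109.01617 — 3 statements merged into one kernel-verified Lean document; each statement's English description precedes it below -/
import Mathlib

section
/- Let μ be a probability measure on paths satisfying the exponential intersection tails property: there exist C, α > 0 with (μ × μ)(|p₁ ∩ p₂| ≥ k) ≤ C e^{−αk} for all k ≥ 1. Suppose λ ∈ (0,1) satisfies λ^{-2} ≤ 1 + 2/β with β large. Then E_{μ×μ}[(1/λ²)^{|p₁ ∩ p₂|}] ≤ 1 + a·(log β)/β for some constant a depending only on C and α, provided β is larger than some β* depending only on C, α. -/
open MeasureTheory Real

/-- Second-moment estimate (Abbe et al.): if `μ` is a probability measure on paths whose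
number of common edges `N p₁ p₂` has exponential intersection tails with constants `C, α`,
and `λ ∈ (0,1)` satisfies `λ⁻² ≤ 1 + 2/β`, then for `β` large (depending only on `C, α`),
`E_{μ×μ}[(1/λ²)^{|p₁ ∩ p₂|}] ≤ 1 + a (log β)/β` with `a` depending only on `C, α`. -/
theorem stmt3 (C α : ℝ) (hC : 0 < C) (hα : 0 < α) :
    ∃ a βstar : ℝ, 0 < a ∧ 0 < βstar ∧
      ∀ {P : Type} [MeasurableSpace P] (μ : Measure P) [IsProbabilityMeasure μ]
        (N : P × P → ℕ), Measurable N →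
        (∀ k : ℕ, 1 ≤ k →
          ((μ.prod μ) {q | k ≤ N q}).toReal ≤ C * Real.exp (-α * k)) →
        ∀ β : ℝ, βstar ≤ β →
        ∀ lam : ℝ, lam ∈ Set.Ioo (0 : ℝ) 1 → (lam ^ 2)⁻¹ ≤ 1 + 2 / β →
          (∫ q, ((lam ^ 2)⁻¹) ^ (N q) ∂(μ.prod μ)) ≤ 1 + a * Real.log β / β := by
  have hx1 : Real.exp (-(α/2)) < 1 := by
    rw [Real.exp_lt_one_iff]; linarith
  have hx0 : (0:ℝ) ≤ Real.exp (-(α/2)) := (Real.exp_pos _).le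
  have hq : (0:ℝ) < 1 - Real.exp (-(α/2)) := by linarith
  refine ⟨2 * C / (1 - Real.exp (-(α/2))), max (Real.exp 1) (4/α), by positivity,
    lt_of_lt_of_le (Real.exp_pos 1) (le_max_left _ _), ?_⟩
  intro P _ μ _ N hN htail β hβ lam hlam hr2
  set a : ℝ := 2 * C / (1 - Real.exp (-(α/2))) with ha
  set ν : Measure (P × P) := μ.prod μ with hν
  set r : ℝ := (lam ^ 2)⁻¹ with hrdef
  obtain ⟨hlam0, hlam1⟩ := hlam
  have hβe : Real.exp 1 ≤ β := le_trans (le_max_left _ _) hβ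
  have hβα : 4/α ≤ β := le_trans (le_max_right _ _) hβ
  have hβ0 : 0 < β := lt_of_lt_of_le (Real.exp_pos 1) hβe
  have hlog : 1 ≤ Real.log β := (Real.le_log_iff_exp_le hβ0).mpr hβe
  have hlam2 : 0 < lam ^ 2 := by positivity
  have hlam2lt : lam ^ 2 < 1 := by nlinarith
  have hr1 : 1 < r := by
    rw [hrdef]
    exact (one_lt_inv₀ hlam2).mpr hlam2lt
  have h2β : 2/β ≤ α/2 := by
    rw [div_le_div_iff₀ hβ0 (by norm_num)]
    rw [div_le_iff₀ hα] at hβα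
    linarith
  have hrexp : r ≤ Real.exp (α/2) := by
    have := Real.add_one_le_exp (α/2)
    linarith
  -- key product fact
  have hxprod : Real.exp (α/2) * Real.exp (-α) = Real.exp (-(α/2)) := by
    rw [← Real.exp_add]; ring_nf
  -- the tail sets are measurable
  have hs : ∀ k : ℕ, MeasurableSet {q : P × P | k + 1 ≤ N q} :=
    fun k => hN (measurableSet_Ici (a := k + 1))
  -- the ENNReal-valued layer functions
  set g : ℕ → P × P → ENNReal := fun k q =>
    Set.indicator {q : P × P | k + 1 ≤ N q} (fun _ => ENNReal.ofReal (r^(k+1) - r^k)) q with hg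
  have hgmeas : ∀ k, Measurable (g k) := fun k =>
    (measurable_const).indicator (hs k)
  have hck : ∀ k : ℕ, 0 ≤ r^(k+1) - r^k := by
    intro k
    have : r^k ≤ r^(k+1) := pow_le_pow_right₀ (le_of_lt hr1) (Nat.le_succ k)
    linarith
  have hrpos : (0:ℝ) < r := lt_trans one_pos hr1
  -- pointwise identity
  have key : ∀ q : P × P, ENNReal.ofReal (r ^ (N q)) = 1 + ∑' k : ℕ, g k q := by
    intro q
    have hind : ∀ k : ℕ, g k q = if k + 1 ≤ N q then ENNReal.ofReal (r^(k+1) - r^k) else 0 := by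
      intro k; rw [hg]; simp [Set.indicator_apply]
    have htsum : ∑' k : ℕ, g k q = ∑ k ∈ Finset.range (N q), ENNReal.ofReal (r^(k+1) - r^k) := by
      rw [tsum_eq_sum (s := Finset.range (N q))]
      · exact Finset.sum_congr rfl fun k hk => by
          rw [hind k, if_pos]; simp only [Finset.mem_range] at hk; omega
      · intro k hk
        rw [hind k, if_neg]; simp only [Finset.mem_range] at hk; omega
    rw [htsum, ← ENNReal.ofReal_sum_of_nonneg (fun k _ => hck k)]
    have hsum : ∑ k ∈ Finset.range (N q), (r^(k+1) - r^k) = r ^ (N q) - 1 := by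
      have := Finset.sum_range_sub (f := fun i => r ^ i) (N q)
      simp only [pow_zero] at this
      exact this
    rw [hsum]
    have h1 : (1:ℝ) ≤ r ^ (N q) := one_le_pow₀ (le_of_lt hr1)
    rw [← ENNReal.ofReal_one, ← ENNReal.ofReal_add (by norm_num) (by linarith)]
    norm_num
  -- integrand is measurable
  have hNmeas : Measurable (fun q : P × P => r ^ (N q)) :=
    (measurable_from_top (f := fun n : ℕ => r ^ n)).comp hN
  -- real integral into lintegral
  have hint : (∫ q, r ^ (N q) ∂ν) = (∫⁻ q, ENNReal.ofReal (r ^ (N q)) ∂ν).toReal := by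
    rw [integral_eq_lintegral_of_nonneg_ae]
    · exact Filter.Eventually.of_forall fun q => by positivity
    · exact hNmeas.aestronglyMeasurable
  -- term bound in ℝ
  have hterm : ∀ k : ℕ, (r^(k+1) - r^k) * (C * Real.exp (-α * (k+1 : ℕ))) ≤
      (2 * C * Real.exp (-α) / β) * (Real.exp (-(α/2)))^k := by
    intro k
    have hck' : r^(k+1) - r^k = r^k * (r - 1) := by ring
    have hexp : Real.exp (-α * (k+1 : ℕ)) = Real.exp (-α) * (Real.exp (-α))^k := by
      rw [← Real.exp_nat_mul, ← Real.exp_add]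
      push_cast; ring_nf
    rw [hck', hexp]
    have h1 : r^k ≤ (Real.exp (α/2))^k := pow_le_pow_left₀ hrpos.le hrexp k
    have h2 : r - 1 ≤ 2/β := by linarith
    have hg0 : (0:ℝ) ≤ (Real.exp (-α))^k := by positivity
    calc r^k * (r - 1) * (C * (Real.exp (-α) * (Real.exp (-α))^k))
        ≤ (Real.exp (α/2))^k * (2/β) * (C * (Real.exp (-α) * (Real.exp (-α))^k)) := by
          have := hck k
          gcongr
      _ = (2 * C * Real.exp (-α) / β) * ((Real.exp (α/2)) * Real.exp (-α))^k := by
          rw [mul_pow]; ring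
      _ = (2 * C * Real.exp (-α) / β) * (Real.exp (-(α/2)))^k := by rw [hxprod]
  -- lintegral bound
  have hlint : (∫⁻ q, ENNReal.ofReal (r ^ (N q)) ∂ν) ≤
      ENNReal.ofReal (1 + a * Real.log β / β) := by
    calc (∫⁻ q, ENNReal.ofReal (r ^ (N q)) ∂ν)
        = ∫⁻ q, (1 + ∑' k : ℕ, g k q) ∂ν := by
          exact lintegral_congr fun q => key q
      _ = (∫⁻ _, (1:ENNReal) ∂ν) + ∫⁻ q, ∑' k : ℕ, g k q ∂ν :=
          lintegral_add_left measurable_const _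
      _ = 1 + ∑' k : ℕ, ∫⁻ q, g k q ∂ν := by
          rw [lintegral_one, measure_univ, lintegral_tsum fun k => (hgmeas k).aemeasurable]
      _ = 1 + ∑' k : ℕ, ENNReal.ofReal (r^(k+1) - r^k) * ν {q : P × P | k + 1 ≤ N q} := by
          congr 1
          exact tsum_congr fun k => lintegral_indicator_const (hs k) _
      _ ≤ 1 + ∑' k : ℕ, ENNReal.ofReal ((2 * C * Real.exp (-α) / β) * (Real.exp (-(α/2)))^k) := by
          gcongr with k
          have hmle : ν {q : P × P | k + 1 ≤ N q} ≤
              ENNReal.ofReal (C * Real.exp (-α * (k+1 : ℕ))) := by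
            rw [ENNReal.le_ofReal_iff_toReal_le (measure_ne_top ν _) (by positivity)]
            exact htail (k+1) (Nat.le_add_left 1 k)
          calc ENNReal.ofReal (r^(k+1) - r^k) * ν {q : P × P | k + 1 ≤ N q}
              ≤ ENNReal.ofReal (r^(k+1) - r^k) * ENNReal.ofReal (C * Real.exp (-α * (k+1 : ℕ))) := by
                gcongr
            _ = ENNReal.ofReal ((r^(k+1) - r^k) * (C * Real.exp (-α * (k+1 : ℕ)))) := by
                rw [← ENNReal.ofReal_mul (hck k)]
            _ ≤ ENNReal.ofReal ((2 * C * Real.exp (-α) / β) * (Real.exp (-(α/2)))^k) :=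
                ENNReal.ofReal_le_ofReal (hterm k)
      _ = 1 + ENNReal.ofReal (∑' k : ℕ, (2 * C * Real.exp (-α) / β) * (Real.exp (-(α/2)))^k) := by
          rw [ENNReal.ofReal_tsum_of_nonneg (fun k => by positivity)
            ((summable_geometric_of_lt_one hx0 hx1).mul_left _)]
      _ ≤ ENNReal.ofReal (1 + a * Real.log β / β) := by
          rw [tsum_mul_left, tsum_geometric_of_lt_one hx0 hx1]
          have hb : 2 * C * Real.exp (-α) / β * (1 - Real.exp (-(α/2)))⁻¹ ≤
              a * Real.log β / β := by
            rw [ha]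
            have he1 : Real.exp (-α) ≤ 1 := by
              rw [Real.exp_le_one_iff]; linarith
            rw [show 2 * C * Real.exp (-α) / β * (1 - Real.exp (-(α/2)))⁻¹
                = (2 * C * Real.exp (-α) / (1 - Real.exp (-(α/2)))) / β from by ring,
              show 2 * C / (1 - Real.exp (-(α/2))) * Real.log β / β
                = (2 * C * Real.log β / (1 - Real.exp (-(α/2)))) / β from by ring]
            gcongr
            linarith
          calc (1:ENNReal) + ENNReal.ofReal (2 * C * Real.exp (-α) / β *
                (1 - Real.exp (-(α/2)))⁻¹)
              ≤ 1 + ENNReal.ofReal (a * Real.log β / β) :=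
                add_le_add_right (ENNReal.ofReal_le_ofReal hb) 1
            _ = ENNReal.ofReal (1 + a * Real.log β / β) := by
                rw [ENNReal.ofReal_add (by norm_num) (by positivity), ENNReal.ofReal_one]
  -- conclude
  rw [hint]
  calc (∫⁻ q, ENNReal.ofReal (r ^ (N q)) ∂ν).toReal
      ≤ (ENNReal.ofReal (1 + a * Real.log β / β)).toReal :=
        ENNReal.toReal_mono ENNReal.ofReal_ne_top hlint
    _ = 1 + a * Real.log β / β := ENNReal.toReal_ofReal (by positivity)
end

section
/- Let X be a nonnegative-integer-valued random variable with P(X ≥ k) ≤ C e^{−αk} for all k ≥ 1, where C, α > 0. Then there exist constants a > 0 and β* > 0 (depending only on C, α) such that for all β ≥ β*, E[(1 + 2/β)^X] ≤ 1 + a·(log β)/β. -/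
open MeasureTheory Real

/-- If `X` is an ℕ-valued random variable with exponential tails
`P(X ≥ k) ≤ C e^{-αk}` for `k ≥ 1`, then there are `a, β* > 0` depending only on `C, α`
such that for all `β ≥ β*`, `E[(1 + 2/β)^X] ≤ 1 + a (log β)/β`. -/
theorem stmt4 (C α : ℝ) (hC : 0 < C) (hα : 0 < α) :
    ∃ a βstar : ℝ, 0 < a ∧ 0 < βstar ∧
      ∀ {Ω : Type} [MeasurableSpace Ω] (P : Measure Ω) [IsProbabilityMeasure P]
        (X : Ω → ℕ), Measurable X →
        (∀ k : ℕ, 1 ≤ k → (P {ω | k ≤ X ω}).toReal ≤ C * Real.exp (-α * k)) →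
        ∀ β : ℝ, βstar ≤ β →
          (∫ ω, (1 + 2 / β) ^ (X ω) ∂P) ≤ 1 + a * Real.log β / β := by
  have hem : Real.exp (-α) < 1 := Real.exp_lt_one_iff.mpr (by linarith)
  have hea : 1 < Real.exp α := Real.one_lt_exp_iff.mpr hα
  have hem0 : 0 < Real.exp (-α) := Real.exp_pos _
  have h1em : 0 < 1 - Real.exp (-α) := by linarith
  have hprod : Real.exp α * Real.exp (-α) = 1 := by
    rw [← Real.exp_add]; simp
  refine ⟨4 * C * Real.exp (-α) / (1 - Real.exp (-α)),
    max (Real.exp 1) (4 / (Real.exp α - 1)), ?_, ?_, ?_⟩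
  · positivity
  · exact lt_max_of_lt_left (Real.exp_pos 1)
  intro Ω _ P _ X hX htail β hβ
  set a : ℝ := 4 * C * Real.exp (-α) / (1 - Real.exp (-α)) with ha_def
  have ha : 0 < a := by positivity
  have hβe : Real.exp 1 ≤ β := le_trans (le_max_left _ _) hβ
  have hβ0 : 0 < β := lt_of_lt_of_le (Real.exp_pos 1) hβe
  have hlogβ : 1 ≤ Real.log β := by
    have := Real.log_le_log (Real.exp_pos 1) hβe
    simpa using this
  have hβ4 : 4 / (Real.exp α - 1) ≤ β := le_trans (le_max_right _ _) hβ
  have h4 : 4 ≤ β * (Real.exp α - 1) := by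
    rw [div_le_iff₀ (by linarith)] at hβ4; linarith
  have h2β : 2 / β ≤ (Real.exp α - 1) / 2 := by
    rw [div_le_div_iff₀ hβ0 (by norm_num)]; linarith
  have h2β0 : 0 < 2 / β := by positivity
  set l : ℝ := 1 + 2 / β with hl_def
  have hl1 : 1 ≤ l := by simp only [hl_def]; linarith
  have hl0 : 0 ≤ l := by linarith
  set r : ℝ := l * Real.exp (-α) with hr_def
  have hr0 : 0 ≤ r := mul_nonneg hl0 hem0.le
  have hr1 : r ≤ (1 + Real.exp (-α)) / 2 := by
    have hll : l ≤ (Real.exp α + 1) / 2 := by simp only [hl_def]; linarith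
    have : l * Real.exp (-α) ≤ (Real.exp α + 1) / 2 * Real.exp (-α) :=
      mul_le_mul_of_nonneg_right hll hem0.le
    calc r = l * Real.exp (-α) := rfl
      _ ≤ (Real.exp α + 1) / 2 * Real.exp (-α) := this
      _ = (Real.exp α * Real.exp (-α) + Real.exp (-α)) / 2 := by ring
      _ = (1 + Real.exp (-α)) / 2 := by rw [hprod]
  have hrlt : r < 1 := lt_of_le_of_lt hr1 (by linarith)
  have h1r : (1 - Real.exp (-α)) / 2 ≤ 1 - r := by linarith
  have h1rpos : 0 < 1 - r := by linarith
  -- the coefficients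
  set c : ℕ → ℝ := fun k => (l - 1) * l ^ k with hc_def
  have hc0 : ∀ k, 0 ≤ c k := fun k => mul_nonneg (by linarith) (pow_nonneg hl0 k)
  -- pointwise layer-cake identity
  have hpt : ∀ n : ℕ, ENNReal.ofReal (l ^ n)
      = 1 + ∑' k : ℕ, (if k < n then ENNReal.ofReal (c k) else 0) := by
    intro n
    have hsum : ∑' k : ℕ, (if k < n then ENNReal.ofReal (c k) else 0)
        = ∑ k ∈ Finset.range n, ENNReal.ofReal (c k) := by
      rw [tsum_eq_sum (s := Finset.range n)]
      · exact Finset.sum_congr rfl fun k hk => if_pos (Finset.mem_range.mp hk)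
      · intro k hk
        exact if_neg (by simpa using hk)
    rw [hsum, ← ENNReal.ofReal_sum_of_nonneg fun i _ => hc0 i]
    have hgeom : ∑ k ∈ Finset.range n, c k = l ^ n - 1 := by
      have : ∑ k ∈ Finset.range n, c k = (∑ k ∈ Finset.range n, l ^ k) * (l - 1) := by
        rw [Finset.sum_mul]; exact Finset.sum_congr rfl fun k _ => mul_comm _ _
      rw [this, geom_sum_mul]
    rw [hgeom]
    have h1n : (1 : ℝ) ≤ l ^ n := one_le_pow₀ hl1
    rw [← ENNReal.ofReal_one, ← ENNReal.ofReal_add (by norm_num) (by linarith)]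
    congr 1; ring
  -- measurability of tail sets
  have hmk : ∀ k : ℕ, MeasurableSet {ω | k < X ω} := fun k => hX measurableSet_Ioi
  set F : ℕ → Ω → ENNReal :=
    fun k ω => Set.indicator {ω | k < X ω} (fun _ => ENNReal.ofReal (c k)) ω with hF_def
  have hFmeas : ∀ k, Measurable (F k) := fun k => measurable_const.indicator (hmk k)
  -- main lintegral identity
  have key : ∫⁻ ω, ENNReal.ofReal (l ^ X ω) ∂P
      = 1 + ∑' k : ℕ, ENNReal.ofReal (c k) * P {ω | k < X ω} := by
    have hptω : ∀ ω, ENNReal.ofReal (l ^ X ω) = 1 + ∑' k : ℕ, F k ω := by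
      intro ω
      rw [hpt (X ω)]
      congr 1
      refine tsum_congr fun k => ?_
      simp [hF_def, Set.indicator_apply, Set.mem_setOf_eq]
    calc ∫⁻ ω, ENNReal.ofReal (l ^ X ω) ∂P
        = ∫⁻ ω, (1 + ∑' k : ℕ, F k ω) ∂P := lintegral_congr hptω
      _ = ∫⁻ _, (1 : ENNReal) ∂P + ∫⁻ ω, ∑' k : ℕ, F k ω ∂P :=
          lintegral_add_left measurable_const _
      _ = 1 + ∑' k : ℕ, ∫⁻ ω, F k ω ∂P := by
          rw [lintegral_const, measure_univ, mul_one,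
            lintegral_tsum fun k => (hFmeas k).aemeasurable]
      _ = 1 + ∑' k : ℕ, ENNReal.ofReal (c k) * P {ω | k < X ω} := by
          congr 1
          exact tsum_congr fun k => lintegral_indicator_const (hmk k) _
  -- tail bound on each term
  have hP : ∀ k : ℕ, P {ω | k < X ω} ≤ ENNReal.ofReal (C * Real.exp (-α * ((k : ℝ) + 1))) := by
    intro k
    have hset : {ω | k < X ω} = {ω | (k + 1 : ℕ) ≤ X ω} := by
      ext ω; simp only [Set.mem_setOf_eq]; omega
    have hb := htail (k + 1) (by omega)
    rw [hset, ← ENNReal.ofReal_toReal (measure_ne_top P _)]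
    refine ENNReal.ofReal_le_ofReal ?_
    have : ((k + 1 : ℕ) : ℝ) = (k : ℝ) + 1 := by push_cast; ring
    rw [← this]; exact hb
  set K : ℝ := (l - 1) * (C * Real.exp (-α)) with hK_def
  have hK0 : 0 ≤ K := mul_nonneg (by linarith) (by positivity)
  have hterm : ∀ k : ℕ, ENNReal.ofReal (c k) * P {ω | k < X ω}
      ≤ ENNReal.ofReal (K * r ^ k) := by
    intro k
    calc ENNReal.ofReal (c k) * P {ω | k < X ω}
        ≤ ENNReal.ofReal (c k) * ENNReal.ofReal (C * Real.exp (-α * ((k : ℝ) + 1))) :=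
          mul_le_mul' le_rfl (hP k)
      _ = ENNReal.ofReal (c k * (C * Real.exp (-α * ((k : ℝ) + 1)))) :=
          (ENNReal.ofReal_mul (hc0 k)).symm
      _ = ENNReal.ofReal (K * r ^ k) := by
          congr 1
          have hexp : Real.exp (-α * ((k : ℝ) + 1)) = Real.exp (-α) * Real.exp (-α) ^ k := by
            rw [show -α * ((k : ℝ) + 1) = -α + (k : ℝ) * (-α) by ring, Real.exp_add,
              Real.exp_nat_mul]
          simp only [hc_def, hK_def, hr_def, hexp, mul_pow]
          ring
  -- geometric series bound
  have hsummable : Summable fun k : ℕ => K * r ^ k :=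
    (summable_geometric_of_lt_one hr0 hrlt).mul_left K
  have hsum_bound : ∑' k : ℕ, ENNReal.ofReal (c k) * P {ω | k < X ω}
      ≤ ENNReal.ofReal (a * Real.log β / β) := by
    calc ∑' k : ℕ, ENNReal.ofReal (c k) * P {ω | k < X ω}
        ≤ ∑' k : ℕ, ENNReal.ofReal (K * r ^ k) := ENNReal.tsum_le_tsum hterm
      _ = ENNReal.ofReal (∑' k : ℕ, K * r ^ k) :=
          (ENNReal.ofReal_tsum_of_nonneg (fun k => mul_nonneg hK0 (pow_nonneg hr0 k))
            hsummable).symm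
      _ ≤ ENNReal.ofReal (a * Real.log β / β) := by
          refine ENNReal.ofReal_le_ofReal ?_
          rw [tsum_mul_left, tsum_geometric_of_lt_one hr0 hrlt]
          have hinv : (1 - r)⁻¹ ≤ 2 / (1 - Real.exp (-α)) := by
            have h2 : (0 : ℝ) < (1 - Real.exp (-α)) / 2 := by linarith
            calc (1 - r)⁻¹ ≤ ((1 - Real.exp (-α)) / 2)⁻¹ := by
                  exact inv_anti₀ h2 h1r
              _ = 2 / (1 - Real.exp (-α)) := by rw [inv_div]
          have hKr : K * (1 - r)⁻¹ ≤ K * (2 / (1 - Real.exp (-α))) :=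
            mul_le_mul_of_nonneg_left hinv hK0
          have heq : K * (2 / (1 - Real.exp (-α))) = a / β := by
            simp only [hK_def, ha_def, hl_def]
            field_simp
            ring
          have hfinal : a / β ≤ a * Real.log β / β := by
            have : a ≤ a * Real.log β := le_mul_of_one_le_right ha.le hlogβ
            exact (div_le_div_iff_of_pos_right hβ0).mpr this
          calc K * (1 - r)⁻¹ ≤ K * (2 / (1 - Real.exp (-α))) := hKr
            _ = a / β := heq
            _ ≤ a * Real.log β / β := hfinal
  -- combine
  have hnonneg : (0 : ℝ) ≤ a * Real.log β / β :=
    div_nonneg (mul_nonneg ha.le (by linarith)) hβ0.le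
  have hfin : ∫⁻ ω, ENNReal.ofReal (l ^ X ω) ∂P ≤ ENNReal.ofReal (1 + a * Real.log β / β) := by
    rw [key, ENNReal.ofReal_add (by norm_num) hnonneg, ENNReal.ofReal_one]
    exact add_le_add le_rfl hsum_bound
  have hnn : 0 ≤ᵐ[P] fun ω => l ^ X ω :=
    Filter.Eventually.of_forall fun ω => pow_nonneg hl0 _
  have hmeas : AEStronglyMeasurable (fun ω => l ^ X ω) P :=
    ((measurable_from_top (f := fun n : ℕ => l ^ n)).comp hX).aestronglyMeasurable
  rw [integral_eq_lintegral_of_nonneg_ae hnn hmeas]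
  exact ENNReal.toReal_le_of_le_ofReal (by linarith) hfin
end

section
/- Let Λ be a finite graph, and for β > 0 consider the Nishimori-averaged quenched XY measure: disorder ω_{ij} i.i.d. (per unoriented edge, antisymmetric in orientation) with density Z_β⁻¹ e^{β cos ω} on [−π,π), and quenched Gibbs weight proportional to e^{(β/2) Σ_{(ij)∈Ē} cos(θ(i)−θ(j)+ω_{ij})}. Then for any bounded measurable 2π-periodic functions f_{ij}, E_β^{XY}[⟨∏_{(ij)} f_{ij}(θ(i) − θ(j) + ω_{ij})⟩_{ω,β,Λ}] = ∏_{(ij)} (∫_{−π}^π f_{ij}(ω) e^{β cos ω} dω / Z_β). In particular, under the averaged quenched measure, the edge variables θ(i) − θ(j) + ω_{ij} over distinct unoriented edges are i.i.d. with density ρ_β. -/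
open Real MeasureTheory

/-- Spin measure: product of Lebesgue measure on `[0, 2π)` over vertices. -/
noncomputable def spinMeasure (V : Type*) [Fintype V] : Measure (V → ℝ) :=
  Measure.pi fun _ : V => volume.restrict (Set.Ico 0 (2 * π))

/-- Quenched XY Gibbs weight for disorder `η` on the (oriented representatives of the)
edges `E` : `exp(β Σ_{e ∈ E} cos(θ(i) - θ(j) + η_e))` (which equals the weight
`(β/2) Σ` over both orientations). -/
noncomputable def gibbsWeightXY {V : Type*} (E : Finset (V × V)) (β : ℝ)
    (η : ↥E → ℝ) (θ : V → ℝ) : ℝ :=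
  Real.exp (β * ∑ e : ↥E, Real.cos (θ (e : V × V).1 - θ (e : V × V).2 + η e))

/-- Quenched XY Gibbs expectation of an observable `F` of the spins. -/
noncomputable def quenchedExpXY {V : Type*} [Fintype V] (E : Finset (V × V)) (β : ℝ)
    (η : ↥E → ℝ) (F : (V → ℝ) → ℝ) : ℝ :=
  (∫ θ, F θ * gibbsWeightXY E β η θ ∂spinMeasure V) /
    (∫ θ, gibbsWeightXY E β η θ ∂spinMeasure V)

/-- Normalization of the Nishimori edge density. -/
noncomputable def Znish (β : ℝ) : ℝ := ∫ x in (-π)..π, Real.exp (β * Real.cos x)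

/-- Average over the Nishimori disorder: each edge carries an independent angle in
`[-π, π)` with density `Z_β⁻¹ e^{β cos ω}`. -/
noncomputable def nishimoriAvg {V : Type*} (E : Finset (V × V)) (β : ℝ)
    (G : (↥E → ℝ) → ℝ) : ℝ :=
  (∫ η, G η * ∏ e : ↥E, Real.exp (β * Real.cos (η e))
      ∂(Measure.pi fun _ : ↥E => volume.restrict (Set.Ico (-π) π))) / Znish β ^ E.card


set_option linter.unusedSectionVars false
set_option maxHeartbeats 1000000

section NishAux
open Function
open Real MeasureTheory Function

instance : Fact ((0:ℝ) < 2 * π) := ⟨Real.two_pi_pos⟩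

noncomputable def cosA : AddCircle (2 * π) → ℝ := Real.cos_periodic.lift

lemma cosA_coe (x : ℝ) : cosA x = Real.cos x := Real.cos_periodic.lift_coe x

lemma measurable_cosA : Measurable cosA := Real.measurable_cos

lemma cosA_neg (x : AddCircle (2 * π)) : cosA (-x) = cosA x := by
  induction x using QuotientAddGroup.induction_on with
  | H z =>
    rw [← AddCircle.coe_neg, cosA_coe, cosA_coe, Real.cos_neg]

lemma abs_cosA_le_one (x : AddCircle (2 * π)) : |cosA x| ≤ 1 := by
  induction x using QuotientAddGroup.induction_on with
  | H z => rw [cosA_coe]; exact Real.abs_cos_le_one z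

noncomputable def NishLift (g : ℝ → ℝ) (hg : Function.Periodic g (2 * π)) :
    AddCircle (2 * π) → ℝ := hg.lift

lemma NishLift_coe (g : ℝ → ℝ) (hg : Function.Periodic g (2 * π)) (x : ℝ) :
    NishLift g hg x = g x := hg.lift_coe x

lemma NishLift_meas (g : ℝ → ℝ) (hg : Function.Periodic g (2 * π)) (h : Measurable g) :
    Measurable (NishLift g hg) := h

lemma NishLift_abs_le (g : ℝ → ℝ) (hg : Function.Periodic g (2 * π)) {M : ℝ}
    (h : ∀ x, |g x| ≤ M) (y : AddCircle (2 * π)) : |NishLift g hg y| ≤ M := by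
  induction y using QuotientAddGroup.induction_on with
  | H z => rw [NishLift_coe]; exact h z

lemma transfer_pi {ι : Type*} [Fintype ι] (a : ℝ) (F : (ι → AddCircle (2 * π)) → ℝ)
    (hF : Measurable F) :
    ∫ x, F (fun i => (x i : AddCircle (2 * π)))
        ∂(Measure.pi fun _ : ι => volume.restrict (Set.Ico a (a + 2 * π))) = ∫ y, F y := by
  have h1 : (Measure.pi fun _ : ι => volume.restrict (Set.Ico a (a + 2 * π)))
      = Measure.pi fun _ : ι => volume.restrict (Set.Ioc a (a + 2 * π)) :=
    congrArg Measure.pi (funext fun _ => Measure.restrict_congr_set Ico_ae_eq_Ioc)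
  have hmp : MeasurePreserving (fun (x : ι → ℝ) (i : ι) => (x i : AddCircle (2 * π)))
      (Measure.pi fun _ : ι => volume.restrict (Set.Ioc a (a + 2 * π))) volume := by
    have h2 := measurePreserving_pi (fun _ : ι => volume.restrict (Set.Ioc a (a + 2 * π)))
      (fun _ : ι => (volume : Measure (AddCircle (2 * π))))
      (fun _ => AddCircle.measurePreserving_mk (2 * π) a)
    rwa [← volume_pi] at h2
  rw [h1, ← hmp.map_eq,
    integral_map hmp.measurable.aemeasurable (hmp.map_eq.symm ▸ hF.aestronglyMeasurable)]

lemma transfer_one (g : AddCircle (2 * π) → ℝ) :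
    ∫ y, g y = ∫ x in Set.Ioc (-π) π, g ↑x := by
  have h : Set.Ioc (-π) π = Set.Ioc (-π) (-π + 2 * π) := by rw [show -π + 2 * π = π by ring]
  rw [h, AddCircle.integral_preimage (2 * π) (-π) g]

lemma integrable_of_bound {α : Type*} [MeasurableSpace α] (μ : Measure α) [IsFiniteMeasure μ]
    {g : α → ℝ} (hg : AEStronglyMeasurable g μ) (C : ℝ) (h : ∀ x, |g x| ≤ C) :
    Integrable g μ :=
  ⟨hg, HasFiniteIntegral.of_bounded (C := C)
    (Filter.Eventually.of_forall fun x => by simpa [Real.norm_eq_abs] using h x)⟩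

lemma measurable_comp₂ {α β γ δ : Type*} [MeasurableSpace α] [MeasurableSpace β]
    [MeasurableSpace γ] [MeasurableSpace δ] {F : α → β → γ}
    (hF : Measurable (Function.uncurry F)) {g : δ → α} {h : δ → β}
    (hg : Measurable g) (hh : Measurable h) : Measurable (fun x => F (g x) (h x)) := by
  have heq : (fun x => F (g x) (h x)) = (Function.uncurry F) ∘ (fun x => (g x, h x)) := rfl
  rw [heq]; exact hF.comp (hg.prodMk hh)

lemma measurable_uncurry_left {α β γ : Type*} [MeasurableSpace α] [MeasurableSpace β]
    [MeasurableSpace γ] {F : α → β → γ} (h : Measurable (Function.uncurry F)) (a : α) :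
    Measurable (F a) := h.comp measurable_prodMk_left
section WA
variable {V : Type*} [Fintype V] (E : Finset (V × V)) (β : ℝ)

/-- Gibbs weight on the circle. -/
noncomputable def WA (η : ↥E → AddCircle (2 * π)) (θ : V → AddCircle (2 * π)) : ℝ :=
  ∏ e : ↥E, Real.exp (β * cosA (θ (e : V × V).1 - θ (e : V × V).2 + η e))

/-- Partition function on the circle. -/
noncomputable def ZA (η : ↥E → AddCircle (2 * π)) : ℝ := ∫ θ, WA E β η θ

lemma WA_pos (η θ) : 0 < WA E β η θ := Finset.prod_pos fun _ _ => Real.exp_pos _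

lemma WA_le (hβ : 0 ≤ β) (η θ) : WA E β η θ ≤ Real.exp β ^ (Fintype.card ↥E) := by
  rw [← Finset.card_univ, ← Finset.prod_const]
  refine Finset.prod_le_prod (fun _ _ => (Real.exp_pos _).le) fun e _ => ?_
  apply Real.exp_le_exp.2
  calc β * cosA _ ≤ β * 1 := by
        refine mul_le_mul_of_nonneg_left ?_ hβ
        exact le_trans (le_abs_self _) (abs_cosA_le_one _)
    _ = β := mul_one β

lemma WA_ge (hβ : 0 ≤ β) (η θ) : Real.exp (-β) ^ (Fintype.card ↥E) ≤ WA E β η θ := by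
  rw [← Finset.card_univ, ← Finset.prod_const]
  refine Finset.prod_le_prod (fun _ _ => (Real.exp_pos _).le) fun e _ => ?_
  apply Real.exp_le_exp.2
  calc -β = β * (-1) := by ring
    _ ≤ β * cosA _ := by
        refine mul_le_mul_of_nonneg_left ?_ hβ
        exact neg_le_of_abs_le (abs_cosA_le_one _)

lemma WA_meas : Measurable (uncurry (WA E β)) := by
  unfold WA uncurry
  apply Finset.measurable_prod
  intro e _
  have ha : Measurable fun p : (↥E → AddCircle (2 * π)) × (V → AddCircle (2 * π)) =>
      p.2 (e : V × V).1 := (measurable_pi_apply _).comp measurable_snd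
  have hb : Measurable fun p : (↥E → AddCircle (2 * π)) × (V → AddCircle (2 * π)) =>
      p.2 (e : V × V).2 := (measurable_pi_apply _).comp measurable_snd
  have hc : Measurable fun p : (↥E → AddCircle (2 * π)) × (V → AddCircle (2 * π)) =>
      p.1 e := (measurable_pi_apply _).comp measurable_fst
  exact Real.measurable_exp.comp (measurable_const.mul (measurable_cosA.comp
    ((ha.sub hb).add hc)))

lemma WA_integrable (hβ : 0 ≤ β) (η) : Integrable (WA E β η) volume := by
  refine integrable_of_bound _ ?_ (Real.exp β ^ (Fintype.card ↥E)) (fun θ => ?_)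
  · exact ((WA_meas E β).comp measurable_prodMk_left).aestronglyMeasurable
  · rw [abs_of_pos (WA_pos E β η θ)]; exact WA_le E β hβ η θ

lemma volume_univ_toReal_pos : 0 < (volume (Set.univ : Set (V → AddCircle (2 * π)))).toReal := by
  refine ENNReal.toReal_pos ?_ (measure_ne_top _ _)
  rw [volume_pi, Measure.pi_univ]
  simp only [AddCircle.measure_univ]
  refine (Finset.prod_ne_zero_iff).2 fun i _ => ?_
  exact (ENNReal.ofReal_pos.2 Real.two_pi_pos).ne'

lemma ZA_ge (hβ : 0 ≤ β) (η) :
    Real.exp (-β) ^ (Fintype.card ↥E) * (volume (Set.univ : Set (V → AddCircle (2 * π)))).toReal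
      ≤ ZA E β η := by
  have h := integral_mono (integrable_const (Real.exp (-β) ^ (Fintype.card ↥E)))
    (WA_integrable E β hβ η) (WA_ge E β hβ η)
  rw [integral_const] at h
  calc _ = (volume (Set.univ : Set (V → AddCircle (2 * π)))).toReal
      • Real.exp (-β) ^ (Fintype.card ↥E) := by rw [smul_eq_mul]; ring
    _ ≤ ZA E β η := h

lemma ZA_pos (hβ : 0 ≤ β) (η) : 0 < ZA E β η :=
  lt_of_lt_of_le (mul_pos (pow_pos (Real.exp_pos _) _) volume_univ_toReal_pos) (ZA_ge E β hβ η)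

lemma ZA_le (hβ : 0 ≤ β) (η) :
    ZA E β η ≤ Real.exp β ^ (Fintype.card ↥E)
      * (volume (Set.univ : Set (V → AddCircle (2 * π)))).toReal := by
  have h := integral_mono (WA_integrable E β hβ η)
    (integrable_const (Real.exp β ^ (Fintype.card ↥E))) (WA_le E β hβ η)
  rw [integral_const] at h
  calc ZA E β η ≤ _ := h
    _ = _ := by rw [smul_eq_mul, measureReal_def]; ring

lemma ZA_meas : Measurable (ZA E β) := by
  have := (WA_meas E β).stronglyMeasurable.integral_prod_right'
    (ν := (volume : Measure (V → AddCircle (2 * π))))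
  exact this.measurable

lemma ZA_gauge (η : ↥E → AddCircle (2 * π)) (φ : V → AddCircle (2 * π)) :
    ZA E β (fun e => η e - (φ (e : V × V).1 - φ (e : V × V).2)) = ZA E β η := by
  haveI h1 : Measure.IsNegInvariant (volume : Measure (AddCircle (2 * π))) := inferInstance
  unfold ZA
  rw [← integral_sub_right_eq_self (μ := volume) (WA E β η) φ]
  refine integral_congr_ae (Filter.Eventually.of_forall fun θ => ?_)
  unfold WA
  refine Finset.prod_congr rfl fun e _ => ?_
  have harg : θ (e : V × V).1 - θ (e : V × V).2
        + ((fun e => η e - (φ (e : V × V).1 - φ (e : V × V).2)) e)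
      = (θ - φ) (e : V × V).1 - (θ - φ) (e : V × V).2 + η e := by
    simp only [Pi.sub_apply]; abel
  rw [harg]

lemma ZA_neginv (η : ↥E → AddCircle (2 * π)) :
    ZA E β (fun e => -(η e)) = ZA E β η := by
  haveI h1 : Measure.IsNegInvariant (volume : Measure (AddCircle (2 * π))) := inferInstance
  unfold ZA
  rw [← integral_neg_eq_self (WA E β η) volume]
  refine integral_congr_ae (Filter.Eventually.of_forall fun θ => ?_)
  unfold WA
  refine Finset.prod_congr rfl fun e _ => ?_
  have harg : θ (e : V × V).1 - θ (e : V × V).2 + ((fun e => -η e) e)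
      = -((-θ) (e : V × V).1 - (-θ) (e : V × V).2 + η e) := by
    simp only [Pi.neg_apply]; abel
  rw [harg, cosA_neg]

end WA

end NishAux

/-- Factorization on the Nishimori line (Lemma 2.1, `h = 0`): the averaged quenched
expectation of a product of `2π`-periodic bounded measurable edge observables
`f_{ij}(θ(i) - θ(j) + ω_{ij})` factorizes, the edge variables being i.i.d. with
density `ρ_β`. -/
theorem stmt11 {V : Type*} [Fintype V] (E : Finset (V × V)) (β : ℝ) (hβ : 0 < β)
    (f : ↥E → ℝ → ℝ)
    (hf_meas : ∀ e, Measurable (f e))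
    (hf_bdd : ∀ e, ∃ M, ∀ x, |f e x| ≤ M)
    (hf_per : ∀ e x, f e (x + 2 * π) = f e x) :
    nishimoriAvg E β (fun η => quenchedExpXY E β η
        (fun θ => ∏ e : ↥E, f e (θ (e : V × V).1 - θ (e : V × V).2 + η e))) =
      ∏ e : ↥E, (∫ x in (-π)..π, f e x * Real.exp (β * Real.cos x)) / Znish β := by
  classical
  choose M hM using hf_bdd
  have hβ0 : (0:ℝ) ≤ β := hβ.le
  haveI hni : Measure.IsNegInvariant (volume : Measure (AddCircle (2 * π))) := inferInstance
  -- lifted observables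
  set fA : ↥E → AddCircle (2 * π) → ℝ := fun e => NishLift (f e) (hf_per e) with hfA
  have fA_coe : ∀ e (x : ℝ), fA e ↑x = f e x := fun e x => NishLift_coe _ _ x
  have fA_meas : ∀ e, Measurable (fA e) := fun e => NishLift_meas _ _ (hf_meas e)
  have fA_bdd : ∀ e y, |fA e y| ≤ M e := fun e => NishLift_abs_le _ _ (hM e)
  have hM0 : ∀ e, 0 ≤ M e := fun e => le_trans (abs_nonneg _) (fA_bdd e 0)
  -- group-level objects
  set AObs : (↥E → AddCircle (2 * π)) → (V → AddCircle (2 * π)) → ℝ :=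
    fun η θ => ∏ e : ↥E, fA e (θ (e : V × V).1 - θ (e : V × V).2 + η e) with hAObs
  set PA : (↥E → AddCircle (2 * π)) → ℝ :=
    fun η => ∏ e : ↥E, Real.exp (β * cosA (η e)) with hPAdef
  set NumA : (↥E → AddCircle (2 * π)) → ℝ := fun η => ∫ θ, AObs η θ * WA E β η θ with hNumA
  -- measurability
  have hAObs_meas : Measurable (Function.uncurry AObs) := by
    apply Finset.measurable_prod
    intro e _
    have ha : Measurable fun p : (↥E → AddCircle (2 * π)) × (V → AddCircle (2 * π)) =>
        p.2 (e : V × V).1 := (measurable_pi_apply _).comp measurable_snd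
    have hb : Measurable fun p : (↥E → AddCircle (2 * π)) × (V → AddCircle (2 * π)) =>
        p.2 (e : V × V).2 := (measurable_pi_apply _).comp measurable_snd
    have hc : Measurable fun p : (↥E → AddCircle (2 * π)) × (V → AddCircle (2 * π)) =>
        p.1 e := (measurable_pi_apply _).comp measurable_fst
    exact (fA_meas e).comp ((ha.sub hb).add hc)
  have hPA_meas : Measurable PA := by
    apply Finset.measurable_prod
    intro e _
    exact Real.measurable_exp.comp
      (measurable_const.mul (measurable_cosA.comp (measurable_pi_apply _)))
  have hNumA_meas : Measurable NumA := by
    have h := ((hAObs_meas.mul (WA_meas E β)).stronglyMeasurable.integral_prod_right'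
      (ν := (volume : Measure (V → AddCircle (2 * π)))))
    exact h.measurable
  -- bounds
  set cE := Fintype.card ↥E with hcE
  set MF : ℝ := ∏ e : ↥E, M e with hMF
  have hMF0 : 0 ≤ MF := Finset.prod_nonneg fun e _ => hM0 e
  set EB : ℝ := Real.exp β ^ cE with hEB
  have hEB0 : 0 < EB := pow_pos (Real.exp_pos _) _
  set m : ℝ := (volume (Set.univ : Set (V → AddCircle (2 * π)))).toReal with hm
  set c0 : ℝ := Real.exp (-β) ^ cE * m with hc0
  have hc0pos : 0 < c0 := mul_pos (pow_pos (Real.exp_pos _) _) volume_univ_toReal_pos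
  have hZA_ge : ∀ η, c0 ≤ ZA E β η := fun η => ZA_ge E β hβ0 η
  have hZA_pos : ∀ η, 0 < ZA E β η := fun η => ZA_pos E β hβ0 η
  have hAObs_bdd : ∀ η θ, |AObs η θ| ≤ MF := by
    intro η θ
    rw [hAObs, Finset.abs_prod]
    exact Finset.prod_le_prod (fun e _ => abs_nonneg _) fun e _ => fA_bdd e _
  have hPA_nonneg : ∀ η, 0 ≤ PA η := fun η => Finset.prod_nonneg fun e _ => (Real.exp_pos _).le
  have hPA_le : ∀ η, PA η ≤ EB := by
    intro η
    rw [hPAdef, hEB, hcE, ← Finset.card_univ, ← Finset.prod_const]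
    refine Finset.prod_le_prod (fun _ _ => (Real.exp_pos _).le) fun e _ => ?_
    apply Real.exp_le_exp.2
    calc β * cosA _ ≤ β * 1 :=
          mul_le_mul_of_nonneg_left (le_trans (le_abs_self _) (abs_cosA_le_one _)) hβ0
      _ = β := mul_one β
  have hPZ_le : ∀ η, PA η / ZA E β η ≤ EB / c0 :=
    fun η => div_le_div₀ hEB0.le (hPA_le η) hc0pos (hZA_ge η)
  have hPZ_nonneg : ∀ η, 0 ≤ PA η / ZA E β η :=
    fun η => div_nonneg (hPA_nonneg η) (hZA_pos η).le
  -- transfer of the spin measure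
  have hspin : spinMeasure V
      = Measure.pi (fun _ : V => volume.restrict (Set.Ico 0 (0 + 2 * π))) := by
    unfold spinMeasure
    simp only [zero_add]
  -- θ-transfers
  have htransA : ∀ η : ↥E → ℝ,
      (∫ θ, (∏ e : ↥E, f e (θ (e : V × V).1 - θ (e : V × V).2 + η e))
          * gibbsWeightXY E β η θ ∂spinMeasure V)
        = NumA (fun e => ↑(η e)) := by
    intro η
    have hFmeas : Measurable (fun θG : V → AddCircle (2 * π) =>
        AObs (fun e => ↑(η e)) θG * WA E β (fun e => ↑(η e)) θG) :=
      (measurable_uncurry_left hAObs_meas _).mul (measurable_uncurry_left (WA_meas E β) _)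
    rw [hspin]
    simp only [hNumA]
    rw [← transfer_pi 0 _ hFmeas]
    refine integral_congr_ae (Filter.Eventually.of_forall fun θ => ?_)
    dsimp only
    have hAe : AObs (fun e => ↑(η e)) (fun i => ((θ i : ℝ) : AddCircle (2 * π)))
        = ∏ e : ↥E, f e (θ (e : V × V).1 - θ (e : V × V).2 + η e) := by
      simp only [hAObs]
      refine Finset.prod_congr rfl fun e _ => ?_
      rw [show ((θ (e : V × V).1 : ℝ) : AddCircle (2 * π)) - ↑(θ (e : V × V).2) + ↑(η e)
          = ((θ (e : V × V).1 - θ (e : V × V).2 + η e : ℝ) : AddCircle (2 * π)) by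
        rw [AddCircle.coe_add, AddCircle.coe_sub], fA_coe]
    have hWe : WA E β (fun e => ↑(η e)) (fun i => ((θ i : ℝ) : AddCircle (2 * π)))
        = gibbsWeightXY E β η θ := by
      unfold gibbsWeightXY WA
      rw [Finset.mul_sum, Real.exp_sum]
      refine Finset.prod_congr rfl fun e _ => ?_
      rw [show ((θ (e : V × V).1 : ℝ) : AddCircle (2 * π)) - ↑(θ (e : V × V).2) + ↑(η e)
          = ((θ (e : V × V).1 - θ (e : V × V).2 + η e : ℝ) : AddCircle (2 * π)) by
        rw [AddCircle.coe_add, AddCircle.coe_sub], cosA_coe]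
    rw [hAe, hWe]
  have htransB : ∀ η : ↥E → ℝ,
      (∫ θ, gibbsWeightXY E β η θ ∂spinMeasure V) = ZA E β (fun e => ↑(η e)) := by
    intro η
    have hFmeas : Measurable (fun θG : V → AddCircle (2 * π) =>
        WA E β (fun e => ↑(η e)) θG) := measurable_uncurry_left (WA_meas E β) _
    rw [hspin]
    unfold ZA
    rw [← transfer_pi 0 _ hFmeas]
    refine integral_congr_ae (Filter.Eventually.of_forall fun θ => ?_)
    dsimp only
    have hWe : WA E β (fun e => ↑(η e)) (fun i => ((θ i : ℝ) : AddCircle (2 * π)))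
        = gibbsWeightXY E β η θ := by
      unfold gibbsWeightXY WA
      rw [Finset.mul_sum, Real.exp_sum]
      refine Finset.prod_congr rfl fun e _ => ?_
      rw [show ((θ (e : V × V).1 : ℝ) : AddCircle (2 * π)) - ↑(θ (e : V × V).2) + ↑(η e)
          = ((θ (e : V × V).1 - θ (e : V × V).2 + η e : ℝ) : AddCircle (2 * π)) by
        rw [AddCircle.coe_add, AddCircle.coe_sub], cosA_coe]
    rw [hWe]
  -- transfer of the disorder average
  have hΦmeas : Measurable (fun η' : ↥E → AddCircle (2 * π) =>
      (NumA η' / ZA E β η') * PA η') :=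
    (hNumA_meas.div (ZA_meas E β)).mul hPA_meas
  have hmain0 :
      (∫ η, quenchedExpXY E β η
          (fun θ => ∏ e : ↥E, f e (θ (e : V × V).1 - θ (e : V × V).2 + η e))
            * ∏ e : ↥E, Real.exp (β * Real.cos (η e))
          ∂(Measure.pi fun _ : ↥E => volume.restrict (Set.Ico (-π) π)))
        = ∫ η', (NumA η' / ZA E β η') * PA η' := by
    rw [show Set.Ico (-π) π = Set.Ico (-π) (-π + 2 * π) by
      rw [show -π + 2 * π = π by ring]]
    rw [← transfer_pi (-π) _ hΦmeas]
    refine integral_congr_ae (Filter.Eventually.of_forall fun η => ?_)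
    have hPe : PA (fun e => ((η e : ℝ) : AddCircle (2 * π)))
        = ∏ e : ↥E, Real.exp (β * Real.cos (η e)) := by
      simp only [hPAdef]
      refine Finset.prod_congr rfl fun e _ => ?_
      rw [cosA_coe]
    simp only [quenchedExpXY]
    rw [htransA η, htransB η, hPe]
  -- the key group-level computation
  set Kf : (↥E → AddCircle (2 * π)) → (V → AddCircle (2 * π)) → ℝ :=
    fun η θ => AObs η θ * WA E β η θ * (PA η / ZA E β η) with hKf
  set Lf : (↥E → AddCircle (2 * π)) → (V → AddCircle (2 * π)) → ℝ :=
    fun ω θ => ((∏ e : ↥E, fA e (ω e)) * PA ω / ZA E β ω)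
      * WA E β (fun e => -(ω e)) θ with hLf
  have hprodmeas : Measurable (fun ω : ↥E → AddCircle (2 * π) => ∏ e : ↥E, fA e (ω e)) :=
    Finset.measurable_prod _ fun e _ => (fA_meas e).comp (measurable_pi_apply _)
  have hKint : Integrable (Function.uncurry Kf)
      ((volume : Measure (↥E → AddCircle (2 * π))).prod
        (volume : Measure (V → AddCircle (2 * π)))) := by
    refine integrable_of_bound _ ?_ (MF * (EB * (EB / c0))) ?_
    · exact ((hAObs_meas.mul (WA_meas E β)).mul
        (((hPA_meas.div (ZA_meas E β))).comp measurable_fst)).aestronglyMeasurable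
    · rintro ⟨η, θ⟩
      have h2 : |WA E β η θ * (PA η / ZA E β η)| ≤ EB * (EB / c0) := by
        rw [abs_mul]
        refine mul_le_mul ?_ ?_ (abs_nonneg _) hEB0.le
        · rw [abs_of_pos (WA_pos E β η θ)]; exact WA_le E β hβ0 η θ
        · rw [abs_of_nonneg (hPZ_nonneg η)]; exact hPZ_le η
      calc |Function.uncurry Kf (η, θ)|
          = |AObs η θ| * |WA E β η θ * (PA η / ZA E β η)| := by
            simp only [Function.uncurry, hKf]
            rw [mul_assoc, abs_mul]
        _ ≤ MF * (EB * (EB / c0)) :=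
            mul_le_mul (hAObs_bdd η θ) h2 (abs_nonneg _)  hMF0
  have hLint : Integrable (Function.uncurry (fun θ ω => Lf ω θ))
      ((volume : Measure (V → AddCircle (2 * π))).prod
        (volume : Measure (↥E → AddCircle (2 * π)))) := by
    have hWneg : Measurable (fun p : (V → AddCircle (2 * π)) × (↥E → AddCircle (2 * π)) =>
        WA E β (fun e => -(p.2 e)) p.1) :=
      measurable_comp₂ (WA_meas E β)
        (measurable_pi_lambda _ fun e => ((measurable_pi_apply e).comp measurable_snd).neg)
        measurable_fst
    refine integrable_of_bound _ ?_ ((MF * EB / c0) * EB) ?_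
    · refine Measurable.aestronglyMeasurable ?_
      refine Measurable.mul ?_ hWneg
      exact ((hprodmeas.mul hPA_meas).div (ZA_meas E β)).comp measurable_snd
    · rintro ⟨θ, ω⟩
      have h1 : |(∏ e : ↥E, fA e (ω e)) * PA ω / ZA E β ω| ≤ MF * EB / c0 := by
        rw [abs_div, abs_of_pos (hZA_pos ω), abs_mul]
        refine div_le_div₀ (by positivity) ?_ hc0pos (hZA_ge ω)
        refine mul_le_mul ?_ ?_ (abs_nonneg _) hMF0
        · rw [Finset.abs_prod]
          exact Finset.prod_le_prod (fun e _ => abs_nonneg _) fun e _ => fA_bdd e _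
        · rw [abs_of_nonneg (hPA_nonneg ω)]; exact hPA_le ω
      calc |Function.uncurry (fun θ ω => Lf ω θ) (θ, ω)|
          = |(∏ e : ↥E, fA e (ω e)) * PA ω / ZA E β ω| * |WA E β (fun e => -(ω e)) θ| := by
            simp only [Function.uncurry, hLf]
            rw [abs_mul]
        _ ≤ (MF * EB / c0) * EB := by
            refine mul_le_mul h1 ?_ (abs_nonneg _) (by positivity)
            rw [abs_of_pos (WA_pos E β _ θ)]; exact WA_le E β hβ0 _ θ
  have key : (∫ η', (NumA η' / ZA E β η') * PA η')
      = ∏ e : ↥E, ∫ y, fA e y * Real.exp (β * cosA y) := by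
    have step1 : ∀ η', (NumA η' / ZA E β η') * PA η' = ∫ θ, Kf η' θ := by
      intro η'
      have h1 : ∫ θ, Kf η' θ = (∫ θ, AObs η' θ * WA E β η' θ) * (PA η' / ZA E β η') := by
        simp only [hKf]
        exact integral_mul_const _ _
      rw [h1]
      simp only [hNumA]
      ring
    calc (∫ η', (NumA η' / ZA E β η') * PA η')
        = ∫ η', ∫ θ, Kf η' θ := integral_congr_ae (Filter.Eventually.of_forall step1)
      _ = ∫ θ, ∫ η', Kf η' θ := integral_integral_swap hKint
      _ = ∫ θ, ∫ ω, Lf ω θ := by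
          refine integral_congr_ae (Filter.Eventually.of_forall fun θ => ?_)
          dsimp only
          rw [← integral_sub_right_eq_self (μ := (volume : Measure (↥E → AddCircle (2 * π))))
            (fun ω => Kf ω θ) (fun e : ↥E => θ (e : V × V).1 - θ (e : V × V).2)]
          refine integral_congr_ae (Filter.Eventually.of_forall fun ω => ?_)
          set c : ↥E → AddCircle (2 * π) := fun e : ↥E => θ (e : V × V).1 - θ (e : V × V).2
            with hc
          have hA : AObs (ω - c) θ = ∏ e : ↥E, fA e (ω e) := by
            rw [hAObs]
            refine Finset.prod_congr rfl fun e _ => ?_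
            congr 1
            show θ (e : V × V).1 - θ (e : V × V).2
              + (ω e - (θ (e : V × V).1 - θ (e : V × V).2)) = ω e
            abel
          have hW : WA E β (ω - c) θ = PA ω := by
            unfold WA
            simp only [hPAdef]
            refine Finset.prod_congr rfl fun e _ => ?_
            have harg : θ (e : V × V).1 - θ (e : V × V).2 + (ω - c) e = ω e := by
              show θ (e : V × V).1 - θ (e : V × V).2
                + (ω e - (θ (e : V × V).1 - θ (e : V × V).2)) = ω e
              abel
            rw [harg]
          have hP : PA (ω - c) = WA E β (fun e => -(ω e)) θ := by
            simp only [hPAdef]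
            unfold WA
            refine Finset.prod_congr rfl fun e _ => ?_
            have harg : -((ω - c) e)
                = θ (e : V × V).1 - θ (e : V × V).2 + (fun e : ↥E => -(ω e)) e := by
              show -(ω e - (θ (e : V × V).1 - θ (e : V × V).2))
                = θ (e : V × V).1 - θ (e : V × V).2 + -ω e
              abel
            rw [← cosA_neg ((ω - c) e), harg]
          have hZ : ZA E β (ω - c) = ZA E β ω := by
            have hrfl : ω - c = fun e : ↥E => ω e - (θ (e : V × V).1 - θ (e : V × V).2) := rfl
            rw [hrfl, ZA_gauge]
          rw [hKf, hLf]
          show AObs (ω - c) θ * WA E β (ω - c) θ * (PA (ω - c) / ZA E β (ω - c))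
            = (∏ e : ↥E, fA e (ω e)) * PA ω / ZA E β ω * WA E β (fun e => -(ω e)) θ
          rw [hA, hW, hP, hZ]
          ring
      _ = ∫ ω, ∫ θ, Lf ω θ := integral_integral_swap hLint
      _ = ∫ ω, (∏ e : ↥E, fA e (ω e)) * PA ω := by
          refine integral_congr_ae (Filter.Eventually.of_forall fun ω => ?_)
          rw [hLf]
          show ∫ θ, ((∏ e : ↥E, fA e (ω e)) * PA ω / ZA E β ω)
              * WA E β (fun e => -(ω e)) θ = _
          rw [integral_const_mul]
          have : (∫ θ, WA E β (fun e => -(ω e)) θ) = ZA E β ω := by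
            rw [show (∫ θ, WA E β (fun e => -(ω e)) θ) = ZA E β (fun e => -(ω e)) from rfl]
            exact ZA_neginv E β ω
          rw [this, div_mul_cancel₀ _ (hZA_pos ω).ne']
      _ = ∫ ω : ↥E → AddCircle (2 * π),
            ∏ e : ↥E, (fA e (ω e) * Real.exp (β * cosA (ω e))) := by
          refine integral_congr_ae (Filter.Eventually.of_forall fun ω => ?_)
          simp only [hPAdef]
          rw [← Finset.prod_mul_distrib]
      _ = ∏ e : ↥E, ∫ y, fA e y * Real.exp (β * cosA y) :=
          integral_fintype_prod_eq_prod (f := fun e y => fA e y * Real.exp (β * cosA y))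
  -- transfer back each factor
  have hfactor : ∀ e : ↥E, (∫ y, fA e y * Real.exp (β * cosA y))
      = ∫ x in (-π)..π, f e x * Real.exp (β * Real.cos x) := by
    intro e
    rw [transfer_one, intervalIntegral.integral_of_le (by linarith [Real.pi_pos])]
    refine integral_congr_ae (Filter.Eventually.of_forall fun x => ?_)
    dsimp only
    rw [fA_coe, cosA_coe]
  -- wrap up
  simp only [nishimoriAvg]
  rw [hmain0, key, Finset.prod_congr rfl fun e _ => hfactor e,
    Finset.prod_div_distrib, Finset.prod_const, Finset.card_univ, Fintype.card_coe]
end
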